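/- Let (X,T) be a flow on a compact Hausdorff space X and let S be a reflexive and monotone binary relation on X. Let Ŝ be the smallest closed T-invariant equivalence relation on X containing S. Then Ŝ is monotone, i.e. every equivalence class of Ŝ is connected. -/

import Mathlib

open Set

theorem stmt1 {T X : Type*} [TopologicalSpace X] [CompactSpace X] [T2Space X]
    [TopologicalSpace T] [Group T] [IsTopologicalGroup T]
    [MulAction T X] [ContinuousSMul T X]
    (S : Set (X × X))
    (hrefl : ∀ x : X, (x, x) ∈ S)
    (hmono : ∀ x : X, IsConnected {y | (x, y) ∈ S})
    (Shat : Setoid X)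
    -- `Shat` is closed
    (hcl : IsClosed {p : X × X | Shat.r p.1 p.2})
    -- `Shat` is `T`-invariant
    (hinv : ∀ (t : T) (x : X), (t • ·) '' {y | Shat.r x y} = {y | Shat.r (t • x) y})
    -- `Shat` contains `S`
    (hsub : ∀ p ∈ S, Shat.r p.1 p.2)
    -- `Shat` is the smallest such relation
    (hmin : ∀ R : Setoid X, IsClosed {p : X × X | R.r p.1 p.2} →
      (∀ (t : T) (x : X), (t • ·) '' {y | R.r x y} = {y | R.r (t • x) y}) →
      (∀ p ∈ S, R.r p.1 p.2) → ∀ x y : X, Shat.r x y → R.r x y) :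
    ∀ x : X, IsConnected {y | Shat.r x y} := by
  classical
  -- the class of a point
  set K : X → Set X := fun x => {y | Shat.r x y} with hK
  have hxK : ∀ x, x ∈ K x := fun x => Shat.refl x
  have hclassEq : ∀ {x y}, Shat.r x y → K x = K y := by
    intro x y h
    ext z
    exact ⟨fun hz => Shat.trans (Shat.symm h) hz, fun hz => Shat.trans h hz⟩
  -- classes are closed
  have hKclosed : ∀ x, IsClosed (K x) := by
    intro x
    have : K x = (fun y => ((x, y) : X × X)) ⁻¹' {p : X × X | Shat.r p.1 p.2} := rfl
    rw [this]
    exact hcl.preimage (Continuous.prodMk_right x)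
  -- the candidate relation
  set r : X → X → Prop := fun x y => y ∈ connectedComponentIn (K x) x with hr
  have hrrefl : ∀ x, r x x := fun x => mem_connectedComponentIn (hxK x)
  have hrsub : ∀ {x y}, r x y → Shat.r x y := fun {x y} h =>
    connectedComponentIn_subset (K x) x h
  have hrsymm : ∀ {x y}, r x y → r y x := by
    intro x y h
    have h1 : Shat.r x y := hrsub h
    have h2 : connectedComponentIn (K x) x = connectedComponentIn (K x) y :=
      connectedComponentIn_eq h
    have h3 : K x = K y := hclassEq h1
    have : x ∈ connectedComponentIn (K x) y := h2 ▸ mem_connectedComponentIn (hxK x)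
    rwa [h3] at this
  have hrtrans : ∀ {x y z}, r x y → r y z → r x z := by
    intro x y z hxy hyz
    have h1 : Shat.r x y := hrsub hxy
    have h2 : connectedComponentIn (K x) x = connectedComponentIn (K x) y :=
      connectedComponentIn_eq hxy
    have h3 : K x = K y := hclassEq h1
    have : z ∈ connectedComponentIn (K x) y := by rw [h3]; exact hyz
    show z ∈ connectedComponentIn (K x) x
    rw [h2]; exact this
  set R : Setoid X := ⟨r, hrrefl, hrsymm, hrtrans⟩ with hR
  have hRr : ∀ x y, R.r x y ↔ r x y := fun _ _ => Iff.rfl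
  -- invariance of R
  have hRinvhalf : ∀ (t : T) (x : X),
      (t • ·) '' connectedComponentIn (K x) x ⊆ connectedComponentIn (K (t • x)) (t • x) := by
    intro t x
    rcases isConnected_connectedComponentIn_iff.2 (hxK x) with ⟨hne, hpre⟩
    have hconn : IsPreconnected ((t • ·) '' connectedComponentIn (K x) x) :=
      hpre.image _ (continuous_const_smul t).continuousOn
    have hmem : t • x ∈ (t • ·) '' connectedComponentIn (K x) x :=
      mem_image_of_mem _ (mem_connectedComponentIn (hxK x))
    have hsubK : (t • ·) '' connectedComponentIn (K x) x ⊆ K (t • x) := by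
      intro z hz
      have : z ∈ {y | Shat.r (t • x) y} := by
        rw [← hinv t x]
        exact image_mono (connectedComponentIn_subset _ _) hz
      exact this
    exact hconn.subset_connectedComponentIn hmem hsubK
  have hRinv : ∀ (t : T) (x : X), (t • ·) '' {y | R.r x y} = {y | R.r (t • x) y} := by
    intro t x
    apply Subset.antisymm
    · exact hRinvhalf t x
    · intro y hy
      have h2 := hRinvhalf t⁻¹ (t • x)
      have : t⁻¹ • y ∈ connectedComponentIn (K (t⁻¹ • t • x)) (t⁻¹ • t • x) :=
        h2 (mem_image_of_mem _ hy)
      rw [inv_smul_smul] at this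
      exact ⟨t⁻¹ • y, this, smul_inv_smul t y⟩
  -- R contains S
  have hRsub : ∀ p ∈ S, R.r p.1 p.2 := by
    rintro ⟨x, y⟩ hp
    rcases hmono x with ⟨hne, hpre⟩
    have hxs : x ∈ {y | (x, y) ∈ S} := hrefl x
    have hsubK : {y | (x, y) ∈ S} ⊆ K x := fun z hz => hsub (x, z) hz
    exact hpre.subset_connectedComponentIn hxs hsubK hp
  -- R is closed
  have hRcl : IsClosed {p : X × X | R.r p.1 p.2} := by
    rw [← isOpen_compl_iff]
    rw [isOpen_prod_iff]
    intro x y hxy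
    simp only [mem_compl_iff, mem_setOf_eq] at hxy
    by_cases hS : Shat.r x y
    · -- y is in the class of x but not in the component of x
      have hxKmem : x ∈ K x := hxK x
      have hKcl : IsClosed (K x) := hKclosed x
      have hKcpt : IsCompact (K x) := hKcl.isCompact
      haveI : CompactSpace (K x) := isCompact_iff_compactSpace.mp hKcpt
      have himg : connectedComponentIn (K x) x =
          (↑) '' connectedComponent (⟨x, hxKmem⟩ : K x) :=
        connectedComponentIn_eq_image hxKmem
      have hyK : y ∈ K x := hS
      have hynotin : (⟨y, hyK⟩ : K x) ∉ connectedComponent (⟨x, hxKmem⟩ : K x) := by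
        intro hmem
        apply hxy
        show y ∈ connectedComponentIn (K x) x
        rw [himg]
        exact ⟨⟨y, hyK⟩, hmem, rfl⟩
      rw [connectedComponent_eq_iInter_isClopen, mem_iInter] at hynotin
      push_neg at hynotin
      obtain ⟨⟨Z, hZclopen, hxZ⟩, hyZ⟩ := hynotin
      -- A = image of Z, B = image of Zᶜ, compact and disjoint
      set A : Set X := (↑) '' Z with hA
      set B : Set X := (↑) '' Zᶜ with hB
      have hAcpt : IsCompact A := (hZclopen.isClosed.isCompact).image continuous_subtype_val
      have hBcpt : IsCompact B :=
        (hZclopen.compl.isClosed.isCompact).image continuous_subtype_val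
      have hABdisj : Disjoint A B := by
        rw [disjoint_left]
        rintro a ⟨z1, hz1, rfl⟩ ⟨z2, hz2, hz⟩
        have : z1 = z2 := Subtype.ext hz.symm
        exact hz2 (this ▸ hz1)
      obtain ⟨U, V, hUopen, hVopen, hAU, hBV, hUV⟩ :=
        SeparatedNhds.of_isCompact_isCompact hAcpt hBcpt hABdisj
      have hxU : x ∈ U := hAU ⟨⟨x, hxKmem⟩, hxZ, rfl⟩
      have hyV : y ∈ V := hBV ⟨⟨y, hyK⟩, hyZ, rfl⟩
      have hKUV : K x ⊆ U ∪ V := by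
        rintro z hz
        by_cases hzZ : (⟨z, hz⟩ : K x) ∈ Z
        · exact Or.inl (hAU ⟨⟨z, hz⟩, hzZ, rfl⟩)
        · exact Or.inr (hBV ⟨⟨z, hz⟩, hzZ, rfl⟩)
      -- upper semicontinuity neighborhood
      set C : Set X := Prod.fst '' ({p : X × X | Shat.r p.1 p.2} ∩ univ ×ˢ (U ∪ V)ᶜ) with hC
      have hCclosed : IsClosed C := by
        have hcpt : IsCompact ({p : X × X | Shat.r p.1 p.2} ∩ univ ×ˢ (U ∪ V)ᶜ) := by
          apply IsClosed.isCompact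
          exact hcl.inter (isClosed_univ.prod (hUopen.union hVopen).isClosed_compl)
        exact (hcpt.image continuous_fst).isClosed
      have hxC : x ∉ C := by
        rintro ⟨⟨a, b⟩, ⟨hab, -, hb⟩, rfl⟩
        exact hb (hKUV hab)
      refine ⟨U ∩ Cᶜ, V, hUopen.inter hCclosed.isOpen_compl, hVopen,
        ⟨hxU, hxC⟩, hyV, ?_⟩
      rintro ⟨x', y'⟩ ⟨⟨hx'U, hx'C⟩, hy'V⟩
      simp only [mem_compl_iff, mem_setOf_eq]
      intro hr'
      -- y' ∈ connectedComponentIn (K x') x'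
      have hK'UV : K x' ⊆ U ∪ V := by
        intro z hz
        by_contra hzUV
        exact hx'C ⟨(x', z), ⟨hz, mem_univ _, hzUV⟩, rfl⟩
      rcases isConnected_connectedComponentIn_iff.2 (hxK x') with ⟨-, hpre⟩
      have hcompU : connectedComponentIn (K x') x' ⊆ U :=
        hpre.subset_left_of_subset_union hUopen hVopen hUV
          ((connectedComponentIn_subset _ _).trans hK'UV)
          ⟨x', mem_connectedComponentIn (hxK x'), hx'U⟩
      exact absurd hy'V (disjoint_left.mp hUV (hcompU hr'))
    · -- x and y are not even Shat-related
      have hopen : IsOpen {p : X × X | Shat.r p.1 p.2}ᶜ := hcl.isOpen_compl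
      obtain ⟨u, v, hu, hv, hxu, hyv, huv⟩ :=
        isOpen_prod_iff.mp hopen x y hS
      refine ⟨u, v, hu, hv, hxu, hyv, ?_⟩
      intro p hp
      have : p ∉ {p : X × X | Shat.r p.1 p.2} := huv hp
      exact fun h => this (hrsub h)
  -- apply minimality
  have hle := hmin R hRcl hRinv hRsub
  intro x
  have hKeq : K x = connectedComponentIn (K x) x := by
    apply Subset.antisymm
    · intro y hy
      exact hle x y hy
    · exact connectedComponentIn_subset _ _
  show IsConnected (K x)
  rw [hKeq]
  exact isConnected_connectedComponentIn_iff.2 (hxK x)
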